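/- Let B be a totally definite quaternion algebra over a totally real field F with maximal order R, let 𝔞 and 𝔟 be right R-ideals with left order R_𝔞 of 𝔞, and let 𝔭 be a prime ideal of O_F. Then the map u ↦ u⁻¹𝔞 induces a bijection between the set of orbits of R_𝔞^× (acting by left multiplication) on {u ∈ 𝔞𝔟⁻¹ : (nr(u)) = nr(𝔞)nr(𝔟)⁻¹𝔭} and the set of fractional right R-ideals 𝔠 properly containing 𝔟 such that nr(𝔟) = nr(𝔠)𝔭 and 𝔠 is isomorphic to 𝔞 as a right R-module. -/

import Mathlib

open NumberField Module
open scoped Quaternion nonZeroDivisors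

noncomputable section

variable {F : Type*} [Field F] [NumberField F] {a b : F}

/-- The reduced norm on a quaternion algebra `(a, b / F)`. -/
def quatNorm (x : ℍ[F, a, b]) : F :=
  (x * star x).re

/-- The reduced norm ideal of a subset of a quaternion algebra: the `𝓞 F`-submodule of `F`
generated by the reduced norms of its elements. -/
def nrIdeal (S : Set ℍ[F, a, b]) : Submodule (𝓞 F) F :=
  Submodule.span (𝓞 F) (quatNorm '' S)

/-- The image of an ideal `𝔭` of `𝓞 F` in `F`, as an `𝓞 F`-submodule of `F`. -/
def idealToSubmodule (𝔭 : Ideal (𝓞 F)) : Submodule (𝓞 F) F :=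
  Submodule.map (Algebra.linearMap (𝓞 F) F) 𝔭

/-- The left order of a subset `𝔞` of an algebra: `R_𝔞 = {x : x𝔞 ⊆ 𝔞}`. -/
def leftOrder {B : Type*} [Ring B] (𝔞 : Set B) : Set B :=
  {x : B | ∀ y ∈ 𝔞, x * y ∈ 𝔞}

/-- `S` is a (fractional) right ideal for a subring `R` of the quaternion algebra:
it is an additive subgroup, stable under right multiplication by `R`, finitely generated,
and spans the quaternion algebra over `F`. -/
def IsRightIdeal (R : Subring ℍ[F, a, b]) (A : AddSubgroup ℍ[F, a, b]) : Prop :=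
  (∀ x ∈ A, ∀ r ∈ R, x * r ∈ A) ∧ A.FG ∧ Submodule.span F (A : Set ℍ[F, a, b]) = ⊤

/-- `R` is an `𝓞 F`-order in the quaternion algebra: a subring containing `𝓞 F` which is a
finitely generated full lattice. -/
def IsOrder (R : Subring ℍ[F, a, b]) : Prop :=
  (∀ x : 𝓞 F, algebraMap F ℍ[F, a, b] (x : F) ∈ R) ∧ R.toAddSubgroup.FG ∧
    Submodule.span F (R : Set ℍ[F, a, b]) = ⊤

/-- `R` is a maximal order in the quaternion algebra. -/
def IsMaximalOrder (R : Subring ℍ[F, a, b]) : Prop :=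
  IsOrder R ∧ ∀ R' : Subring ℍ[F, a, b], IsOrder R' → R ≤ R' → R' = R

/-- The set `Θ(𝔭, 𝔞, 𝔟) = {u ∈ 𝔞𝔟⁻¹ : (nr u) = nr(𝔞)nr(𝔟)⁻¹𝔭}`, where membership
`u ∈ 𝔞𝔟⁻¹` is expressed as `u𝔟 ⊆ 𝔞` and the reduced norm condition is written in the
(equivalent) multiplied-out form `(nr u)·nr(𝔟) = nr(𝔞)·𝔭`. -/
def Theta (𝔞 𝔟 : AddSubgroup ℍ[F, a, b]) (𝔭 : Ideal (𝓞 F)) : Type _ :=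
  {u : ℍ[F, a, b] // (∀ x ∈ 𝔟, u * x ∈ 𝔞) ∧
    Submodule.span (𝓞 F) {quatNorm u} * nrIdeal (𝔟 : Set ℍ[F, a, b]) =
      nrIdeal (𝔞 : Set ℍ[F, a, b]) * idealToSubmodule 𝔭}

/-- The equivalence relation on `Θ(𝔭, 𝔞, 𝔟)` given by left multiplication by units of the
left order `R_𝔞`. -/
def thetaSetoid (𝔞 𝔟 : AddSubgroup ℍ[F, a, b]) (𝔭 : Ideal (𝓞 F)) :
    Setoid (Theta 𝔞 𝔟 𝔭) where
  r u v := ∃ γ : (ℍ[F, a, b])ˣ,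
    (↑γ : ℍ[F, a, b]) ∈ leftOrder (𝔞 : Set ℍ[F, a, b]) ∧
    (↑γ⁻¹ : ℍ[F, a, b]) ∈ leftOrder (𝔞 : Set ℍ[F, a, b]) ∧
    v.1 = ↑γ * u.1
  iseqv := by
    constructor
    · exact fun u => ⟨1, fun y hy => by simpa, fun y hy => by simpa, by simp⟩
    · rintro u v ⟨γ, h1, h2, hv⟩
      exact ⟨γ⁻¹, h2, by simpa, by rw [hv, ← mul_assoc]; simp⟩
    · rintro u v w ⟨γ, h1, h2, hv⟩ ⟨δ, k1, k2, hw⟩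
      refine ⟨δ * γ, fun y hy => ?_, fun y hy => ?_, ?_⟩
      · rw [Units.val_mul, mul_assoc]; exact k1 _ (h1 _ hy)
      · rw [mul_inv_rev, Units.val_mul, mul_assoc]; exact h2 _ (k2 _ hy)
      · rw [hw, hv, Units.val_mul, mul_assoc]

lemma quatNorm_def (x : ℍ[F, a, b]) :
    quatNorm x = x.re*x.re - a*(x.imI*x.imI) - b*(x.imJ*x.imJ) + a*b*(x.imK*x.imK) := by
  simp [quatNorm, QuaternionAlgebra.re_mul]; ring

lemma quatNorm_mul (x y : ℍ[F, a, b]) : quatNorm (x * y) = quatNorm x * quatNorm y := by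
  simp only [quatNorm_def, QuaternionAlgebra.re_mul, QuaternionAlgebra.imI_mul,
    QuaternionAlgebra.imJ_mul, QuaternionAlgebra.imK_mul]
  ring

lemma quatNorm_zero : quatNorm (0 : ℍ[F, a, b]) = 0 := by simp [quatNorm_def]
lemma quatNorm_one : quatNorm (1 : ℍ[F, a, b]) = 1 := by simp [quatNorm_def]
lemma quatNorm_neg (x : ℍ[F, a, b]) : quatNorm (-x) = quatNorm x := by simp [quatNorm_def]

lemma qmul_star (x : ℍ[F, a, b]) : x * star x = QuaternionAlgebra.coe (quatNorm x) :=
  QuaternionAlgebra.mul_star_eq_coe x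

lemma qstar_mul (x : ℍ[F, a, b]) : star x * x = QuaternionAlgebra.coe (quatNorm x) := by
  have h := QuaternionAlgebra.star_mul_eq_coe x
  rw [h]
  congr 1
  simp [quatNorm, QuaternionAlgebra.re_mul]

/-- positivity: nonzero elements have nonzero norm -/
lemma quatNorm_ne_zero (htot : ∀ v : InfinitePlace F, v.IsReal)
    (hdef : ∀ τ : F →+* ℝ, τ a < 0 ∧ τ b < 0) {x : ℍ[F, a, b]} (hx : x ≠ 0) :
    quatNorm x ≠ 0 := by
  obtain ⟨w⟩ := (inferInstance : Nonempty (InfinitePlace F))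
  set τ : F →+* ℝ := NumberField.InfinitePlace.embedding_of_isReal (htot w)
  obtain ⟨ha, hb⟩ := hdef τ
  intro h0
  have hτ : τ (quatNorm x) = 0 := by rw [h0, map_zero]
  rw [quatNorm_def] at hτ
  simp only [map_add, map_sub, map_mul] at hτ
  have h1 : τ x.re * τ x.re + (-τ a) * (τ x.imI * τ x.imI) + (-τ b) * (τ x.imJ * τ x.imJ)
      + (τ a * τ b) * (τ x.imK * τ x.imK) = 0 := by linarith
  have hre : τ x.re = 0 ∧ τ x.imI = 0 ∧ τ x.imJ = 0 ∧ τ x.imK = 0 := by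
    have t1 : (0:ℝ) ≤ τ x.re * τ x.re := mul_self_nonneg _
    have t2 : (0:ℝ) ≤ (-τ a) * (τ x.imI * τ x.imI) :=
      mul_nonneg (by linarith) (mul_self_nonneg _)
    have t3 : (0:ℝ) ≤ (-τ b) * (τ x.imJ * τ x.imJ) :=
      mul_nonneg (by linarith) (mul_self_nonneg _)
    have t4 : (0:ℝ) ≤ (τ a * τ b) * (τ x.imK * τ x.imK) :=
      mul_nonneg (mul_pos_of_neg_of_neg ha hb).le (mul_self_nonneg _)
    have e1 : τ x.re * τ x.re = 0 := by linarith
    have e2 : (-τ a) * (τ x.imI * τ x.imI) = 0 := by linarith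
    have e3 : (-τ b) * (τ x.imJ * τ x.imJ) = 0 := by linarith
    have e4 : (τ a * τ b) * (τ x.imK * τ x.imK) = 0 := by linarith
    refine ⟨by nlinarith, ?_, ?_, ?_⟩
    · rcases mul_eq_zero.mp e2 with h | h
      · exact absurd h (by linarith)
      · exact (mul_self_eq_zero).mp h
    · rcases mul_eq_zero.mp e3 with h | h
      · exact absurd h (by linarith)
      · exact (mul_self_eq_zero).mp h
    · rcases mul_eq_zero.mp e4 with h | h
      · exact absurd h (ne_of_gt (mul_pos_of_neg_of_neg ha hb))
      · exact (mul_self_eq_zero).mp h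
  have hinj : Function.Injective τ := τ.injective
  apply hx
  ext
  · exact hinj (by simpa using hre.1)
  · exact hinj (by simpa using hre.2.1)
  · exact hinj (by simpa using hre.2.2.1)
  · exact hinj (by simpa using hre.2.2.2)


/-- inverse of a nonzero quaternion as a unit -/
def quatUnit (x : ℍ[F, a, b]) (hn : quatNorm x ≠ 0) : (ℍ[F, a, b])ˣ where
  val := x
  inv := (quatNorm x)⁻¹ • star x
  val_inv := by
    rw [mul_smul_comm, qmul_star]
    have : (quatNorm x)⁻¹ • (QuaternionAlgebra.coe (quatNorm x) : ℍ[F, a, b])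
        = QuaternionAlgebra.coe ((quatNorm x)⁻¹ * quatNorm x) := by
      ext <;> simp [QuaternionAlgebra.coe]
    rw [this, inv_mul_cancel₀ hn]
    rfl
  inv_val := by
    rw [smul_mul_assoc, qstar_mul]
    have : (quatNorm x)⁻¹ • (QuaternionAlgebra.coe (quatNorm x) : ℍ[F, a, b])
        = QuaternionAlgebra.coe ((quatNorm x)⁻¹ * quatNorm x) := by
      ext <;> simp [QuaternionAlgebra.coe]
    rw [this, inv_mul_cancel₀ hn]
    rfl

lemma quatNorm_inv (u : (ℍ[F, a, b])ˣ) : quatNorm (↑u⁻¹ : ℍ[F, a, b]) * quatNorm (u : ℍ[F, a, b]) = 1 := by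
  rw [← quatNorm_mul, u.inv_mul, quatNorm_one]

/-- span of a singleton times a span -/
lemma span_singleton_mul_span (q : F) (T : Set F) :
    Submodule.span (𝓞 F) {q} * Submodule.span (𝓞 F) T
      = Submodule.span (𝓞 F) ((q * ·) '' T) := by
  apply le_antisymm
  · rw [Submodule.mul_le]
    intro m hm n hn
    rw [Submodule.mem_span_singleton] at hm
    obtain ⟨r, rfl⟩ := hm
    rw [smul_mul_assoc]
    refine Submodule.smul_mem _ _ ?_
    refine Submodule.span_induction (fun y hy => ?_) (by simp) (fun y z _ _ hy hz => ?_)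
      (fun r y _ hy => ?_) hn
    · exact Submodule.subset_span ⟨y, hy, rfl⟩
    · rw [mul_add]; exact Submodule.add_mem _ hy hz
    · rw [mul_smul_comm]; exact Submodule.smul_mem _ _ hy
  · rw [Submodule.span_le]
    rintro _ ⟨t, ht, rfl⟩
    exact Submodule.mul_mem_mul (Submodule.mem_span_singleton_self q) (Submodule.subset_span ht)

lemma nrIdeal_image (c : ℍ[F, a, b]) (S : Set ℍ[F, a, b]) :
    nrIdeal ((c * ·) '' S) = Submodule.span (𝓞 F) {quatNorm c} * nrIdeal S := by
  rw [nrIdeal, nrIdeal, span_singleton_mul_span, ← Set.image_comp, ← Set.image_comp]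
  congr 1
  ext x
  simp only [Function.comp_apply, quatNorm_mul]

lemma span_singleton_mul_span_singleton (q r : F) :
    Submodule.span (𝓞 F) {q} * Submodule.span (𝓞 F) {r} = Submodule.span (𝓞 F) {q * r} := by
  rw [span_singleton_mul_span, Set.image_singleton]

lemma span_one_mul (M : Submodule (𝓞 F) F) : Submodule.span (𝓞 F) {(1:F)} * M = M := by
  rw [← Submodule.one_eq_span, one_mul]

/-- polarization form -/
def quatB (x y : ℍ[F, a, b]) : F := quatNorm (x + y) - quatNorm x - quatNorm y

lemma quatB_def (x y : ℍ[F, a, b]) :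
    quatB x y = 2*(x.re*y.re) - 2*a*(x.imI*y.imI) - 2*b*(x.imJ*y.imJ) + 2*(a*b)*(x.imK*y.imK) := by
  simp only [quatB, quatNorm_def, QuaternionAlgebra.re_add, QuaternionAlgebra.imI_add,
    QuaternionAlgebra.imJ_add, QuaternionAlgebra.imK_add]
  ring

lemma quatNorm_add (x y : ℍ[F, a, b]) :
    quatNorm (x + y) = quatNorm x + quatNorm y + quatB x y := by
  simp [quatB]

lemma quatB_add_left (x y z : ℍ[F, a, b]) : quatB (x + y) z = quatB x z + quatB y z := by
  simp only [quatB_def, QuaternionAlgebra.re_add, QuaternionAlgebra.imI_add,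
    QuaternionAlgebra.imJ_add, QuaternionAlgebra.imK_add]
  ring

lemma quatB_add_right (x y z : ℍ[F, a, b]) : quatB x (y + z) = quatB x y + quatB x z := by
  simp only [quatB_def, QuaternionAlgebra.re_add, QuaternionAlgebra.imI_add,
    QuaternionAlgebra.imJ_add, QuaternionAlgebra.imK_add]
  ring

lemma quatB_neg_left (x y : ℍ[F, a, b]) : quatB (-x) y = -quatB x y := by
  simp only [quatB_def, QuaternionAlgebra.re_neg, QuaternionAlgebra.imI_neg,
    QuaternionAlgebra.imJ_neg, QuaternionAlgebra.imK_neg]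
  ring

lemma quatB_neg_right (x y : ℍ[F, a, b]) : quatB x (-y) = -quatB x y := by
  simp only [quatB_def, QuaternionAlgebra.re_neg, QuaternionAlgebra.imI_neg,
    QuaternionAlgebra.imJ_neg, QuaternionAlgebra.imK_neg]
  ring

lemma quatB_zero_left (y : ℍ[F, a, b]) : quatB 0 y = 0 := by
  simp [quatB, quatNorm_zero]

lemma quatB_zero_right (x : ℍ[F, a, b]) : quatB x 0 = 0 := by
  simp [quatB, quatNorm_zero]

lemma nrIdeal_isFractional (A : AddSubgroup ℍ[F, a, b]) (hA : A.FG) :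
    IsFractional (𝓞 F)⁰ (nrIdeal (A : Set ℍ[F, a, b])) := by
  obtain ⟨S, hS⟩ := hA
  set M : Submodule (𝓞 F) F :=
    Submodule.span (𝓞 F) ((quatNorm '' (S : Set ℍ[F, a, b])) ∪
      Set.image2 quatB (S : Set ℍ[F, a, b]) (S : Set ℍ[F, a, b])) with hM
  have hMfg : M.FG := Submodule.fg_span
    ((S.finite_toSet.image _).union (Set.Finite.image2 _ S.finite_toSet S.finite_toSet))
  have hB1 : ∀ s ∈ (S : Set ℍ[F, a, b]), ∀ y ∈ AddSubgroup.closure (S : Set ℍ[F, a, b]),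
      quatB s y ∈ M := by
    intro s hs y hy
    refine AddSubgroup.closure_induction (fun t ht => ?_) ?_ (fun y z _ _ h1 h2 => ?_)
      (fun y _ h1 => ?_) hy
    · exact Submodule.subset_span (Or.inr ⟨s, hs, t, ht, rfl⟩)
    · rw [quatB_zero_right]; exact Submodule.zero_mem M
    · rw [quatB_add_right]; exact Submodule.add_mem M h1 h2
    · rw [quatB_neg_right]; exact Submodule.neg_mem M h1
  have hB : ∀ x ∈ AddSubgroup.closure (S : Set ℍ[F, a, b]),
      ∀ y ∈ AddSubgroup.closure (S : Set ℍ[F, a, b]), quatB x y ∈ M := by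
    intro x hx
    refine AddSubgroup.closure_induction (fun t ht => hB1 t ht) ?_ (fun x z _ _ h1 h2 => ?_)
      (fun x _ h1 => ?_) hx
    · intro y _; rw [quatB_zero_left]; exact Submodule.zero_mem M
    · intro y hy; rw [quatB_add_left]; exact Submodule.add_mem M (h1 y hy) (h2 y hy)
    · intro y hy; rw [quatB_neg_left]; exact Submodule.neg_mem M (h1 y hy)
  have hN : ∀ x ∈ AddSubgroup.closure (S : Set ℍ[F, a, b]), quatNorm x ∈ M := by
    intro x hx
    refine AddSubgroup.closure_induction (fun t ht => ?_) ?_ (fun x z hx hz h1 h2 => ?_)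
      (fun x _ h1 => ?_) hx
    · exact Submodule.subset_span (Or.inl ⟨t, ht, rfl⟩)
    · rw [quatNorm_zero]; exact Submodule.zero_mem M
    · rw [quatNorm_add]
      exact Submodule.add_mem M (Submodule.add_mem M h1 h2) (hB x hx z hz)
    · rw [quatNorm_neg]; exact h1
  have hle : nrIdeal (A : Set ℍ[F, a, b]) ≤ M := by
    rw [nrIdeal, Submodule.span_le]
    rintro _ ⟨x, hx, rfl⟩
    rw [← hS] at hx
    exact hN x hx
  exact FractionalIdeal.isFractional_of_le (J := ⟨M, FractionalIdeal.isFractional_of_fg hMfg⟩) hle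

lemma mul_ideal_ne_self {M : Submodule (𝓞 F) F} (hf : IsFractional (𝓞 F)⁰ M) (hM : M ≠ ⊥)
    {𝔭 : Ideal (𝓞 F)} (h𝔭 : 𝔭 ≠ ⊤) : M * idealToSubmodule 𝔭 ≠ M := by
  intro h
  set J : FractionalIdeal (𝓞 F)⁰ F := ⟨M, hf⟩ with hJ
  have hJ0 : J ≠ 0 := by
    intro h0
    apply hM
    have := congrArg (fun I : FractionalIdeal (𝓞 F)⁰ F => (I : Submodule (𝓞 F) F)) h0
    simpa [hJ] using this
  have hcoe : ((𝔭 : FractionalIdeal (𝓞 F)⁰ F) : Submodule (𝓞 F) F) = idealToSubmodule 𝔭 := by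
    rw [FractionalIdeal.coe_coeIdeal]
    rfl
  have hmul : J * (𝔭 : FractionalIdeal (𝓞 F)⁰ F) = J * 1 := by
    rw [mul_one]
    have hc : ((J * (𝔭 : FractionalIdeal (𝓞 F)⁰ F) : FractionalIdeal (𝓞 F)⁰ F) :
        Submodule (𝓞 F) F) = (J : Submodule (𝓞 F) F) := by
      rw [FractionalIdeal.coe_mul, hcoe]
      exact h
    exact FractionalIdeal.coeToSubmodule_injective hc
  have h1 := mul_left_cancel₀ hJ0 hmul
  rw [FractionalIdeal.coeIdeal_eq_one, Ideal.one_eq_top] at h1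
  exact h𝔭 h1


/-- preimage description -/
lemma unit_setOf_eq (U : (ℍ[F, a, b])ˣ) (s : Set ℍ[F, a, b]) :
    {x : ℍ[F, a, b] | (↑U : ℍ[F, a, b]) * x ∈ s} = (fun y => (↑U⁻¹ : ℍ[F, a, b]) * y) '' s := by
  ext x
  constructor
  · intro hx
    refine ⟨(↑U : ℍ[F, a, b]) * x, hx, ?_⟩
    show (↑U⁻¹ : ℍ[F, a, b]) * ((↑U : ℍ[F, a, b]) * x) = x
    rw [← mul_assoc, U.inv_mul, one_mul]
  · rintro ⟨y, hy, rfl⟩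
    show (↑U : ℍ[F, a, b]) * ((↑U⁻¹ : ℍ[F, a, b]) * y) ∈ s
    rwa [← mul_assoc, U.mul_inv, one_mul]

/-- nonemptiness of nonzero elements in a full lattice -/
lemma exists_ne_zero_of_span (A : AddSubgroup ℍ[F, a, b])
    (hsp : Submodule.span F (A : Set ℍ[F, a, b]) = ⊤) :
    ∃ z ∈ A, z ≠ (0 : ℍ[F, a, b]) := by
  by_contra h
  push_neg at h
  have hsub : (A : Set ℍ[F, a, b]) ⊆ {0} := fun z hz => h z hz
  have : Submodule.span F (A : Set ℍ[F, a, b]) ≤ ⊥ := by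
    rw [← Submodule.span_zero_singleton F]
    exact Submodule.span_mono hsub
  rw [hsp] at this
  have heq : (⊤ : Submodule F ℍ[F, a, b]) = ⊥ := le_bot_iff.mp this
  have h1 : (1 : ℍ[F, a, b]) ∈ (⊥ : Submodule F ℍ[F, a, b]) := heq ▸ Submodule.mem_top
  rw [Submodule.mem_bot] at h1
  exact one_ne_zero h1

lemma nrIdeal_ne_bot (htot : ∀ v : InfinitePlace F, v.IsReal)
    (hdef : ∀ τ : F →+* ℝ, τ a < 0 ∧ τ b < 0) (A : AddSubgroup ℍ[F, a, b])
    (hsp : Submodule.span F (A : Set ℍ[F, a, b]) = ⊤) :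
    nrIdeal (A : Set ℍ[F, a, b]) ≠ ⊥ := by
  obtain ⟨z, hz, hz0⟩ := exists_ne_zero_of_span A hsp
  rw [Submodule.ne_bot_iff]
  exact ⟨quatNorm z, Submodule.subset_span ⟨z, hz, rfl⟩, quatNorm_ne_zero htot hdef hz0⟩

lemma idealToSubmodule_ne_bot {𝔭 : Ideal (𝓞 F)} (h𝔭0 : 𝔭 ≠ ⊥) :
    idealToSubmodule (F := F) 𝔭 ≠ ⊥ := by
  obtain ⟨p, hp, hp0⟩ := Submodule.ne_bot_iff 𝔭 |>.mp h𝔭0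
  rw [Submodule.ne_bot_iff]
  refine ⟨algebraMap (𝓞 F) F p, ⟨p, hp, rfl⟩, ?_⟩
  simpa using (map_ne_zero_iff _ (IsFractionRing.injective (𝓞 F) F)).mpr hp0


/-- Let `B` be a totally definite quaternion algebra over a totally real
number field `F`, `R` a maximal order, `𝔞`, `𝔟` right `R`-ideals, and `𝔭` a nonzero prime of
`𝓞 F`.  Then `u ↦ u⁻¹𝔞` induces a bijection between the orbits of `R_𝔞^×` on
`Θ(𝔭, 𝔞, 𝔟) = {u ∈ 𝔞𝔟⁻¹ : (nr u) = nr(𝔞)nr(𝔟)⁻¹𝔭}` and the set of fractional right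
`R`-ideals `𝔠` properly containing `𝔟` with `nr(𝔟) = nr(𝔠)𝔭` and `𝔠 ≅ 𝔞` as right
`R`-modules (i.e. `𝔠 = w⁻¹𝔞` for a unit `w`). -/
theorem theta_orbits_equiv_ideals
    (htot : ∀ v : InfinitePlace F, v.IsReal)
    (hdef : ∀ τ : F →+* ℝ, τ a < 0 ∧ τ b < 0)
    (R : Subring ℍ[F, a, b]) (hR : IsMaximalOrder R)
    (𝔞 𝔟 : AddSubgroup ℍ[F, a, b])
    (h𝔞 : IsRightIdeal R 𝔞) (h𝔟 : IsRightIdeal R 𝔟)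
    (𝔭 : Ideal (𝓞 F)) (h𝔭 : 𝔭.IsPrime) (h𝔭0 : 𝔭 ≠ ⊥) :
    ∃ e : Quotient (thetaSetoid 𝔞 𝔟 𝔭) ≃
        {𝔠 : Set ℍ[F, a, b] //
          (∃ A : AddSubgroup ℍ[F, a, b], (A : Set ℍ[F, a, b]) = 𝔠 ∧ IsRightIdeal R A) ∧
          (𝔟 : Set ℍ[F, a, b]) ⊂ 𝔠 ∧
          nrIdeal (𝔟 : Set ℍ[F, a, b]) = nrIdeal 𝔠 * idealToSubmodule 𝔭 ∧
          (∃ w : (ℍ[F, a, b])ˣ,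
            𝔠 = (fun y => (↑w⁻¹ : ℍ[F, a, b]) * y) '' (𝔞 : Set ℍ[F, a, b]))},
      ∀ u : Theta 𝔞 𝔟 𝔭,
        (e (Quotient.mk (thetaSetoid 𝔞 𝔟 𝔭) u)).1 =
          {x : ℍ[F, a, b] | u.1 * x ∈ 𝔞} := by
  classical
  have hnra : nrIdeal (𝔞 : Set ℍ[F, a, b]) ≠ ⊥ := nrIdeal_ne_bot htot hdef 𝔞 h𝔞.2.2
  have hps : idealToSubmodule (F := F) 𝔭 ≠ ⊥ := idealToSubmodule_ne_bot h𝔭0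
  -- norm of Theta elements is nonzero
  have hnorm : ∀ u : Theta 𝔞 𝔟 𝔭, quatNorm u.1 ≠ 0 := by
    intro u hu0
    have h2 := u.2.2
    rw [hu0, Submodule.span_zero_singleton, Submodule.bot_mul] at h2
    obtain ⟨m, hm, hm0⟩ := Submodule.ne_bot_iff _ |>.mp hnra
    obtain ⟨n, hn, hn0⟩ := Submodule.ne_bot_iff _ |>.mp hps
    have : m * n ∈ (⊥ : Submodule (𝓞 F) F) := h2 ▸ Submodule.mul_mem_mul hm hn
    rw [Submodule.mem_bot] at this
    exact mul_ne_zero hm0 hn0 this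
  -- the defining properties of the image ideal, for an arbitrary pair (unit, norm eq)
  have key : ∀ w : (ℍ[F, a, b])ˣ, (∀ x ∈ 𝔟, (↑w : ℍ[F, a, b]) * x ∈ 𝔞) →
      (Submodule.span (𝓞 F) {quatNorm (↑w : ℍ[F, a, b])} * nrIdeal (𝔟 : Set ℍ[F, a, b]) =
        nrIdeal (𝔞 : Set ℍ[F, a, b]) * idealToSubmodule 𝔭) →
      (∃ A : AddSubgroup ℍ[F, a, b],
          (A : Set ℍ[F, a, b]) = {x : ℍ[F, a, b] | (↑w : ℍ[F, a, b]) * x ∈ 𝔞}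
            ∧ IsRightIdeal R A) ∧
        (𝔟 : Set ℍ[F, a, b]) ⊂ {x : ℍ[F, a, b] | (↑w : ℍ[F, a, b]) * x ∈ 𝔞} ∧
        nrIdeal (𝔟 : Set ℍ[F, a, b]) =
          nrIdeal {x : ℍ[F, a, b] | (↑w : ℍ[F, a, b]) * x ∈ 𝔞} * idealToSubmodule 𝔭 ∧
        (∃ w' : (ℍ[F, a, b])ˣ,
          {x : ℍ[F, a, b] | (↑w : ℍ[F, a, b]) * x ∈ 𝔞}
            = (fun y => (↑w'⁻¹ : ℍ[F, a, b]) * y) '' (𝔞 : Set ℍ[F, a, b])) := by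
    intro w hw1 hw2
    have hset : {x : ℍ[F, a, b] | (↑w : ℍ[F, a, b]) * x ∈ 𝔞}
        = (fun y => (↑w⁻¹ : ℍ[F, a, b]) * y) '' (𝔞 : Set ℍ[F, a, b]) :=
      unit_setOf_eq w (𝔞 : Set ℍ[F, a, b])
    -- the additive subgroup
    set A : AddSubgroup ℍ[F, a, b] := 𝔞.map (AddMonoidHom.mulLeft (↑w⁻¹ : ℍ[F, a, b])) with hA
    have hAcoe : (A : Set ℍ[F, a, b]) = (fun y => (↑w⁻¹ : ℍ[F, a, b]) * y) '' (𝔞 : Set ℍ[F, a, b]) := by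
      rw [hA, AddSubgroup.coe_map]
      rfl
    have hAfg : A.FG := by
      obtain ⟨S, hS⟩ := h𝔞.2.1
      refine ⟨S.image (fun y => (↑w⁻¹ : ℍ[F, a, b]) * y), ?_⟩
      rw [hA, ← hS, Finset.coe_image]
      show AddSubgroup.closure (⇑(AddMonoidHom.mulLeft (↑w⁻¹ : ℍ[F, a, b])) '' ↑S)
        = AddSubgroup.map (AddMonoidHom.mulLeft (↑w⁻¹ : ℍ[F, a, b])) (AddSubgroup.closure ↑S)
      rw [← AddMonoidHom.map_closure]
    have hAspan : Submodule.span F (A : Set ℍ[F, a, b]) = ⊤ := by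
      rw [hAcoe]
      have himg : (fun y => (↑w⁻¹ : ℍ[F, a, b]) * y) '' (𝔞 : Set ℍ[F, a, b])
          = (LinearMap.mulLeft F (↑w⁻¹ : ℍ[F, a, b])) '' (𝔞 : Set ℍ[F, a, b]) := rfl
      rw [himg, Submodule.span_image, h𝔞.2.2, Submodule.map_top, LinearMap.range_eq_top]
      intro y
      refine ⟨(↑w : ℍ[F, a, b]) * y, ?_⟩
      show (↑w⁻¹ : ℍ[F, a, b]) * ((↑w : ℍ[F, a, b]) * y) = y
      rw [← mul_assoc, w.inv_mul, one_mul]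
    have hAright : ∀ x ∈ A, ∀ r ∈ R, x * r ∈ A := by
      intro x hx r hr
      rw [hA, AddSubgroup.mem_map] at hx ⊢
      obtain ⟨y, hy, rfl⟩ := hx
      refine ⟨y * r, h𝔞.1 y hy r hr, ?_⟩
      show (↑w⁻¹ : ℍ[F, a, b]) * (y * r) = (AddMonoidHom.mulLeft (↑w⁻¹ : ℍ[F, a, b])) y * r
      show (↑w⁻¹ : ℍ[F, a, b]) * (y * r) = ((↑w⁻¹ : ℍ[F, a, b]) * y) * r
      rw [mul_assoc]
    -- norm identity
    have hninv : quatNorm (↑w⁻¹ : ℍ[F, a, b]) * quatNorm (↑w : ℍ[F, a, b]) = 1 := quatNorm_inv w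
    have hnrc : nrIdeal {x : ℍ[F, a, b] | (↑w : ℍ[F, a, b]) * x ∈ 𝔞}
        = Submodule.span (𝓞 F) {quatNorm (↑w⁻¹ : ℍ[F, a, b])} * nrIdeal (𝔞 : Set ℍ[F, a, b]) := by
      rw [hset]
      exact nrIdeal_image _ _
    have hmain : nrIdeal (𝔟 : Set ℍ[F, a, b]) =
        nrIdeal {x : ℍ[F, a, b] | (↑w : ℍ[F, a, b]) * x ∈ 𝔞} * idealToSubmodule 𝔭 := by
      rw [hnrc]
      calc nrIdeal (𝔟 : Set ℍ[F, a, b])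
          = Submodule.span (𝓞 F) {(1:F)} * nrIdeal (𝔟 : Set ℍ[F, a, b]) := (span_one_mul _).symm
        _ = Submodule.span (𝓞 F) {quatNorm (↑w⁻¹ : ℍ[F, a, b]) * quatNorm (↑w : ℍ[F, a, b])}
              * nrIdeal (𝔟 : Set ℍ[F, a, b]) := by rw [hninv]
        _ = Submodule.span (𝓞 F) {quatNorm (↑w⁻¹ : ℍ[F, a, b])} *
              (Submodule.span (𝓞 F) {quatNorm (↑w : ℍ[F, a, b])} * nrIdeal (𝔟 : Set ℍ[F, a, b])) := by
              rw [← span_singleton_mul_span_singleton, mul_assoc]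
        _ = Submodule.span (𝓞 F) {quatNorm (↑w⁻¹ : ℍ[F, a, b])} *
              (nrIdeal (𝔞 : Set ℍ[F, a, b]) * idealToSubmodule 𝔭) := by rw [hw2]
        _ = Submodule.span (𝓞 F) {quatNorm (↑w⁻¹ : ℍ[F, a, b])} * nrIdeal (𝔞 : Set ℍ[F, a, b])
              * idealToSubmodule 𝔭 := by rw [mul_assoc]
    -- strictness
    have hsub : (𝔟 : Set ℍ[F, a, b]) ⊆ {x : ℍ[F, a, b] | (↑w : ℍ[F, a, b]) * x ∈ 𝔞} :=
      fun x hx => hw1 x hx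
    have hne : (𝔟 : Set ℍ[F, a, b]) ≠ {x : ℍ[F, a, b] | (↑w : ℍ[F, a, b]) * x ∈ 𝔞} := by
      intro heq
      have hfrac : IsFractional (𝓞 F)⁰ (nrIdeal {x : ℍ[F, a, b] | (↑w : ℍ[F, a, b]) * x ∈ 𝔞}) := by
        have := nrIdeal_isFractional A hAfg
        rwa [hAcoe, ← hset] at this
      have hnb : nrIdeal {x : ℍ[F, a, b] | (↑w : ℍ[F, a, b]) * x ∈ 𝔞} ≠ ⊥ := by
        have := nrIdeal_ne_bot htot hdef A hAspan
        rwa [hAcoe, ← hset] at this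
      have hcontr := mul_ideal_ne_self hfrac hnb h𝔭.ne_top
      apply hcontr
      rw [← hmain, heq]
    refine ⟨⟨A, by rw [hAcoe, ← hset], hAright, hAfg, hAspan⟩,
      HasSubset.Subset.ssubset_of_ne hsub hne, hmain, ⟨w, hset⟩⟩
  -- the map on Theta
  let f : Theta 𝔞 𝔟 𝔭 → {𝔠 : Set ℍ[F, a, b] //
      (∃ A : AddSubgroup ℍ[F, a, b], (A : Set ℍ[F, a, b]) = 𝔠 ∧ IsRightIdeal R A) ∧
      (𝔟 : Set ℍ[F, a, b]) ⊂ 𝔠 ∧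
      nrIdeal (𝔟 : Set ℍ[F, a, b]) = nrIdeal 𝔠 * idealToSubmodule 𝔭 ∧
      (∃ w : (ℍ[F, a, b])ˣ,
        𝔠 = (fun y => (↑w⁻¹ : ℍ[F, a, b]) * y) '' (𝔞 : Set ℍ[F, a, b]))} := fun u =>
    ⟨{x : ℍ[F, a, b] | u.1 * x ∈ 𝔞},
      key (quatUnit u.1 (hnorm u)) u.2.1 u.2.2⟩
  -- f respects the setoid
  have hresp : ∀ u v : Theta 𝔞 𝔟 𝔭, (thetaSetoid 𝔞 𝔟 𝔭).r u v → f u = f v := by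
    rintro u v ⟨γ, h1, h2, hv⟩
    apply Subtype.ext
    show {x : ℍ[F, a, b] | u.1 * x ∈ 𝔞} = {x : ℍ[F, a, b] | v.1 * x ∈ 𝔞}
    ext x
    simp only [Set.mem_setOf_eq, hv]
    constructor
    · intro hx
      rw [mul_assoc]
      exact h1 _ hx
    · intro hx
      have := h2 _ hx
      rwa [← mul_assoc, ← mul_assoc, γ.inv_mul, one_mul] at this
  let g : Quotient (thetaSetoid 𝔞 𝔟 𝔭) → _ := Quotient.lift f hresp
  have hginj : Function.Injective g := by
    intro q1 q2
    refine Quotient.inductionOn₂ q1 q2 ?_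
    intro u v h
    apply Quotient.sound
    have hset : {x : ℍ[F, a, b] | u.1 * x ∈ 𝔞} = {x : ℍ[F, a, b] | v.1 * x ∈ 𝔞} :=
      congrArg Subtype.val h
    set U := quatUnit u.1 (hnorm u) with hU
    set V := quatUnit v.1 (hnorm v) with hV
    have hUval : (↑U : ℍ[F, a, b]) = u.1 := rfl
    have hVval : (↑V : ℍ[F, a, b]) = v.1 := rfl
    refine ⟨V * U⁻¹, ?_, ?_, ?_⟩
    · intro y hy
      have h1 : (↑U⁻¹ : ℍ[F, a, b]) * y ∈ {x : ℍ[F, a, b] | u.1 * x ∈ 𝔞} := by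
        show u.1 * ((↑U⁻¹ : ℍ[F, a, b]) * y) ∈ 𝔞
        rw [← hUval, ← mul_assoc, U.mul_inv, one_mul]
        exact hy
      rw [hset] at h1
      have h1' : v.1 * ((↑U⁻¹ : ℍ[F, a, b]) * y) ∈ 𝔞 := h1
      show (↑(V * U⁻¹) : ℍ[F, a, b]) * y ∈ (𝔞 : Set ℍ[F, a, b])
      rw [Units.val_mul, mul_assoc, hVval]
      exact h1'
    · intro y hy
      have h1 : (↑V⁻¹ : ℍ[F, a, b]) * y ∈ {x : ℍ[F, a, b] | v.1 * x ∈ 𝔞} := by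
        show v.1 * ((↑V⁻¹ : ℍ[F, a, b]) * y) ∈ 𝔞
        rw [← hVval, ← mul_assoc, V.mul_inv, one_mul]
        exact hy
      rw [← hset] at h1
      have h1' : u.1 * ((↑V⁻¹ : ℍ[F, a, b]) * y) ∈ 𝔞 := h1
      show (↑(V * U⁻¹)⁻¹ : ℍ[F, a, b]) * y ∈ (𝔞 : Set ℍ[F, a, b])
      rw [mul_inv_rev, inv_inv, Units.val_mul, mul_assoc, hUval]
      exact h1'
    · show v.1 = (↑(V * U⁻¹) : ℍ[F, a, b]) * u.1
      rw [Units.val_mul, mul_assoc, ← hUval, U.inv_mul, mul_one, hVval]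
  have hgsurj : Function.Surjective g := by
    rintro ⟨cs, ⟨A, hAc, hAR⟩, hsub, hnr, w, hw⟩
    have hwcond1 : ∀ x ∈ 𝔟, (↑w : ℍ[F, a, b]) * x ∈ 𝔞 := by
      intro x hx
      have hxc : x ∈ cs := hsub.1 hx
      rw [hw] at hxc
      obtain ⟨y, hy, hyx⟩ := hxc
      have : (↑w : ℍ[F, a, b]) * x = y := by
        rw [← hyx]
        show (↑w : ℍ[F, a, b]) * ((↑w⁻¹ : ℍ[F, a, b]) * y) = y
        rw [← mul_assoc, w.mul_inv, one_mul]
      rw [this]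
      exact hy
    have hwcond2 : Submodule.span (𝓞 F) {quatNorm (↑w : ℍ[F, a, b])}
        * nrIdeal (𝔟 : Set ℍ[F, a, b])
        = nrIdeal (𝔞 : Set ℍ[F, a, b]) * idealToSubmodule 𝔭 := by
      have hnrc : nrIdeal cs
          = Submodule.span (𝓞 F) {quatNorm (↑w⁻¹ : ℍ[F, a, b])} * nrIdeal (𝔞 : Set ℍ[F, a, b]) := by
        rw [hw]
        exact nrIdeal_image _ _
      have hninv : quatNorm (↑w : ℍ[F, a, b]) * quatNorm (↑w⁻¹ : ℍ[F, a, b]) = 1 := by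
        rw [mul_comm]
        exact quatNorm_inv w
      calc Submodule.span (𝓞 F) {quatNorm (↑w : ℍ[F, a, b])} * nrIdeal (𝔟 : Set ℍ[F, a, b])
          = Submodule.span (𝓞 F) {quatNorm (↑w : ℍ[F, a, b])} *
              (nrIdeal cs * idealToSubmodule 𝔭) := by rw [← hnr]
        _ = Submodule.span (𝓞 F) {quatNorm (↑w : ℍ[F, a, b])} *
              (Submodule.span (𝓞 F) {quatNorm (↑w⁻¹ : ℍ[F, a, b])} *
                (nrIdeal (𝔞 : Set ℍ[F, a, b]) * idealToSubmodule 𝔭)) := by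
              rw [hnrc, mul_assoc]
        _ = Submodule.span (𝓞 F) {quatNorm (↑w : ℍ[F, a, b]) * quatNorm (↑w⁻¹ : ℍ[F, a, b])} *
              (nrIdeal (𝔞 : Set ℍ[F, a, b]) * idealToSubmodule 𝔭) := by
              rw [← span_singleton_mul_span_singleton, mul_assoc]
        _ = nrIdeal (𝔞 : Set ℍ[F, a, b]) * idealToSubmodule 𝔭 := by
              rw [hninv, span_one_mul]
    refine ⟨Quotient.mk _ ⟨(↑w : ℍ[F, a, b]), hwcond1, hwcond2⟩, ?_⟩
    apply Subtype.ext
    show {x : ℍ[F, a, b] | (↑w : ℍ[F, a, b]) * x ∈ 𝔞} = cs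
    rw [hw]
    exact unit_setOf_eq w (𝔞 : Set ℍ[F, a, b])
  exact ⟨Equiv.ofBijective g ⟨hginj, hgsurj⟩, fun u => rfl⟩

end
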